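/- Let $A$ be a C*-algebra, let $a, b \in A_+$ with $\|a - b\| < \eta$ for some $\eta > 0$, and let $\lambda > 0$. Then $(a - \lambda - \eta)_+$ is Cuntz subequivalent to $(b - \lambda)_+$ in $A$. -/

import Mathlib

open Filter Topology

/-- Cuntz subequivalence: `a ≾ b` iff there is a sequence `(cₙ)` with `cₙ b cₙ* → a`. -/
def CuntzSub {A : Type*} [Mul A] [Star A] [TopologicalSpace A] (a b : A) : Prop :=
  ∃ c : ℕ → A, Tendsto (fun n => c n * b * star (c n)) atTop (𝓝 a)

/-- `(a - ε)₊`, obtained by applying `t ↦ max 0 (t - ε)` to `a` via the (nonunital)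
continuous functional calculus. -/
noncomputable def cutdown {A : Type*} [NonUnitalCStarAlgebra A] (a : A) (ε : ℝ) : A :=
  cfcₙ (fun t : ℝ => max 0 (t - ε)) a

open Unitization
open scoped CStarAlgebra


section Key

variable {B : Type*} [CStarAlgebra B] [PartialOrder B] [StarOrderedRing B]

lemma myAlgebraMap_nonneg {r : ℝ} (hr : 0 ≤ r) : 0 ≤ algebraMap ℝ B r := by
  have : algebraMap ℝ B r = star (algebraMap ℝ B (Real.sqrt r)) * algebraMap ℝ B (Real.sqrt r) := by
    rw [IsSelfAdjoint.algebraMap B (IsSelfAdjoint.all _), ← map_mul, Real.mul_self_sqrt hr]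
  rw [this]
  exact star_mul_self_nonneg _

lemma myAlgebraMap_mono {r t : ℝ} (hrt : r ≤ t) : algebraMap ℝ B r ≤ algebraMap ℝ B t := by
  have := myAlgebraMap_nonneg (B := B) (sub_nonneg.mpr hrt)
  rw [map_sub] at this
  exact sub_nonneg.mp this

end Key

section Key2
variable {B : Type*} [CStarAlgebra B] [PartialOrder B] [StarOrderedRing B]

lemma key_approx (x y : B) (hx : 0 ≤ x) (hy : 0 ≤ y) {s : ℝ} (hs : 0 < s)
    (hxy : x ≤ y + algebraMap ℝ B s) :
    ‖x - (cfc Real.sqrt x * cfc (fun t : ℝ => (Real.sqrt (t + 2 * s))⁻¹) y) * y *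
      star (cfc Real.sqrt x * cfc (fun t : ℝ => (Real.sqrt (t + 2 * s))⁻¹) y)‖ ≤ 2 * s := by
  have hx' : IsSelfAdjoint x := .of_nonneg hx
  have hy' : IsSelfAdjoint y := .of_nonneg hy
  have hσy : ∀ t ∈ spectrum ℝ y, (0 : ℝ) ≤ t := fun t ht => spectrum_nonneg_of_nonneg hy ht
  have hσx : ∀ t ∈ spectrum ℝ x, (0 : ℝ) ≤ t := fun t ht => spectrum_nonneg_of_nonneg hx ht
  have hdpos : ∀ t ∈ spectrum ℝ y, 0 < t + 2 * s := fun t ht => by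
    have := hσy t ht; linarith
  have hden : ∀ t ∈ spectrum ℝ y, t + 2 * s ≠ 0 := fun t ht => (hdpos t ht).ne'
  have c1 : ContinuousOn (fun t : ℝ => t + 2 * s) (spectrum ℝ y) := by fun_prop
  have hmc : ContinuousOn (fun t : ℝ => (Real.sqrt (t + 2 * s))⁻¹) (spectrum ℝ y) :=
    (Real.continuous_sqrt.comp_continuousOn c1).inv₀ fun t ht =>
      (Real.sqrt_pos.mpr (hdpos t ht)).ne'
  have hgc : ContinuousOn (fun t : ℝ => s / (t + 2 * s)) (spectrum ℝ y) :=
    continuousOn_const.div c1 hden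
  have hsqgc : ContinuousOn (fun t : ℝ => Real.sqrt (s / (t + 2 * s))) (spectrum ℝ y) :=
    Real.continuous_sqrt.comp_continuousOn hgc
  have hwc : ContinuousOn (fun t : ℝ => (t + s) / (t + 2 * s)) (spectrum ℝ y) :=
    ContinuousOn.div (by fun_prop) c1 hden
  have hpc : ContinuousOn (fun t : ℝ => t / (t + 2 * s)) (spectrum ℝ y) :=
    ContinuousOn.div (by fun_prop) c1 hden
  set R := cfc Real.sqrt x with hRdef
  set M := cfc (fun t : ℝ => (Real.sqrt (t + 2 * s))⁻¹) y with hMdef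
  set G := cfc (fun t : ℝ => Real.sqrt (s / (t + 2 * s))) y with hGdef
  set W := cfc (fun t : ℝ => (t + s) / (t + 2 * s)) y with hWdef
  have hRsa : IsSelfAdjoint R := cfc_predicate _ _
  have hMsa : IsSelfAdjoint M := cfc_predicate _ _
  have hGsa : IsSelfAdjoint G := cfc_predicate _ _
  have hRR : R * R = x := by
    rw [hRdef, ← cfc_mul _ _ x Real.continuous_sqrt.continuousOn
      Real.continuous_sqrt.continuousOn]
    have h0 : cfc (fun t : ℝ => Real.sqrt t * Real.sqrt t) x = cfc (id : ℝ → ℝ) x :=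
      cfc_congr fun t ht => Real.mul_self_sqrt (hσx t ht)
    rw [h0, cfc_id ℝ x hx']
  -- M * (y * M) = W - G * G
  have hGG : G * G = cfc (fun t : ℝ => s / (t + 2 * s)) y := by
    rw [hGdef, ← cfc_mul _ _ y hsqgc hsqgc]
    exact cfc_congr fun t ht => Real.mul_self_sqrt (by have := hdpos t ht; positivity)
  have hMyM : M * (y * M) = W - G * G := by
    conv_lhs => rw [← cfc_id' ℝ y hy']
    rw [hMdef, ← cfc_mul _ _ y (by fun_prop) hmc, ← cfc_mul _ _ y hmc (by fun_prop), hGG, hWdef,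
      ← cfc_sub _ _ y hwc hgc]
    refine cfc_congr fun t ht => ?_
    have h1 := hdpos t ht
    have h2 : Real.sqrt (t + 2 * s) ≠ 0 := (Real.sqrt_pos.mpr h1).ne'
    have h3 : Real.sqrt (t + 2 * s) * Real.sqrt (t + 2 * s) = t + 2 * s :=
      Real.mul_self_sqrt h1.le
    field_simp
    rw [Real.sq_sqrt h1.le]; ring
  -- the key conjugation bound
  have hconj : ‖R * (G * G * R)‖ ≤ s := by
    have e1 : R * (G * G * R) = star (G * R) * (G * R) := by
      simp only [star_mul, hRsa.star_eq, hGsa.star_eq]; noncomm_ring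
    rw [e1, CStarRing.norm_star_mul_self, ← CStarRing.norm_self_mul_star]
    have e2 : G * R * star (G * R) = star G * x * G := by
      simp only [star_mul, hRsa.star_eq, hGsa.star_eq, ← hRR]; noncomm_ring
    rw [e2]
    have hle : star G * x * G ≤ star G * (y + algebraMap ℝ B s) * G :=
      star_left_conjugate_le_conjugate hxy G
    have hnn : 0 ≤ star G * x * G := star_left_conjugate_nonneg hx G
    refine (CStarAlgebra.norm_le_norm_of_nonneg_of_le hnn hle).trans ?_
    have e3 : star G * (y + algebraMap ℝ B s) * G =
        cfc (fun t : ℝ => Real.sqrt (s / (t + 2 * s)) * ((t + s) *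
          Real.sqrt (s / (t + 2 * s)))) y := by
      have : y + algebraMap ℝ B s = cfc (fun t : ℝ => t + s) y := by
        rw [cfc_add (a := y) (fun t : ℝ => t) (fun _ => s) (by fun_prop) (by fun_prop),
          cfc_id' ℝ y hy', cfc_const s y hy']
      rw [hGsa.star_eq, this, hGdef, mul_assoc,
        ← cfc_mul _ _ y (by fun_prop) hsqgc,
        ← cfc_mul (fun t : ℝ => Real.sqrt (s / (t + 2 * s)))
          (fun t : ℝ => (t + s) * Real.sqrt (s / (t + 2 * s))) y hsqgc
          (ContinuousOn.mul (by fun_prop) hsqgc)]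
    rw [e3]
    refine norm_cfc_le hs.le fun t ht => ?_
    have h1 := hdpos t ht
    have h4 : Real.sqrt (s / (t + 2 * s)) * Real.sqrt (s / (t + 2 * s)) = s / (t + 2 * s) :=
      Real.mul_self_sqrt (by positivity)
    have h5 : 0 ≤ t := hσy t ht
    rw [Real.norm_eq_abs, abs_of_nonneg (by positivity)]
    calc Real.sqrt (s / (t + 2 * s)) * ((t + s) * Real.sqrt (s / (t + 2 * s)))
        = (Real.sqrt (s / (t + 2 * s)) * Real.sqrt (s / (t + 2 * s))) * (t + s) := by ring
      _ = (s / (t + 2 * s)) * (t + s) := by rw [h4]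
      _ ≤ s := by rw [div_mul_eq_mul_div, div_le_iff₀ h1]; nlinarith
  -- x - R * (W * R) = R * (G * G * R)
  have hxRWR : x - R * (W * R) = R * (G * G * R) := by
    have h1W : (1 : B) - W = G * G := by
      rw [hGG, hWdef, ← cfc_const_one ℝ y, ← cfc_sub _ _ y (by fun_prop) hwc]
      refine cfc_congr fun t ht => ?_
      have h1 := hdpos t ht
      show (1:ℝ) - (t + s) / (t + 2 * s) = s / (t + 2 * s)
      rw [eq_div_iff h1.ne', sub_mul, div_mul_cancel₀ _ h1.ne']; ring
    have hexp : R * ((1 - W) * R) = R * R - R * (W * R) := by noncomm_ring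
    rw [← h1W, hexp, hRR]
  -- final computation
  have hfinal : x - (R * M) * y * star (R * M) = R * (G * G * R) + R * (G * G * R) := by
    have hstar : star (R * M) = M * R := by
      rw [star_mul, hRsa.star_eq, hMsa.star_eq]
    rw [hstar]
    have : (R * M) * y * (M * R) = R * ((M * (y * M)) * R) := by noncomm_ring
    rw [this, hMyM]
    have h2 : R * ((W - G * G) * R) = R * (W * R) - R * (G * G * R) := by noncomm_ring
    rw [h2, ← hxRWR]
    abel
  rw [hfinal]
  calc ‖R * (G * G * R) + R * (G * G * R)‖ ≤ ‖R * (G * G * R)‖ + ‖R * (G * G * R)‖ :=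
        norm_add_le _ _
    _ ≤ 2 * s := by linarith

end Key2


theorem exists_approx {A : Type*} [NonUnitalCStarAlgebra A]
    [PartialOrder A] [StarOrderedRing A]
    (a b : A) (ha : 0 ≤ a) (hb : 0 ≤ b) (η : ℝ) (hη : 0 < η)
    (hab : ‖a - b‖ < η) (lam : ℝ) (hlam : 0 < lam) {s : ℝ} (hs : 0 < s) (hslam : s < lam) :
    ∃ c : A, ‖c * cutdown b lam * star c - cutdown a (lam + η)‖ ≤ 2 * s := by
  set ε : ℝ := lam + η with hεdef
  set δ : ℝ := ε - s with hδdef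
  have hδη : η < δ := by rw [hδdef, hεdef]; linarith
  have hδε : δ < ε := by rw [hδdef]; linarith
  have hε0 : 0 < ε := by rw [hεdef]; linarith
  -- the conjugating function
  set f : ℝ → ℝ := fun t => Real.sqrt (max 0 (t - ε) * (max 0 (t - δ))⁻¹) with hfdef
  have hf_eq_zero : ∀ t ≤ ε, f t = 0 := fun t ht => by
    rw [hfdef]
    simp only [max_eq_left (by linarith : t - ε ≤ 0), zero_mul, Real.sqrt_zero]
  have hfc : Continuous f := by
    rw [continuous_iff_continuousAt]
    intro t0
    rcases lt_or_ge t0 ε with h0 | h0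
    · refine ContinuousAt.congr (f := fun _ : ℝ => (0:ℝ)) continuousAt_const ?_
      filter_upwards [Iio_mem_nhds h0] with t ht
      exact (hf_eq_zero t (le_of_lt ht)).symm
    · refine Real.continuous_sqrt.continuousAt.comp ?_
      refine ContinuousAt.mul (by fun_prop) (ContinuousAt.inv₀ (by fun_prop) ?_)
      rw [max_eq_right (by linarith : (0:ℝ) ≤ t0 - δ)]
      exact ne_of_gt (by linarith)
  have hf_sq : ∀ t : ℝ, f t * f t = max 0 (t - ε) * (max 0 (t - δ))⁻¹ := fun t => by
    rw [hfdef]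
    exact Real.mul_self_sqrt (by positivity)
  have hf_sq_le_one : ∀ t : ℝ, f t * f t ≤ 1 := fun t => by
    rw [hf_sq t]
    rcases le_or_gt t ε with h0 | h0
    · rw [max_eq_left (by linarith : t - ε ≤ 0), zero_mul]; norm_num
    · rw [max_eq_right (by linarith : (0:ℝ) ≤ t - ε),
        max_eq_right (by linarith : (0:ℝ) ≤ t - δ), ← div_eq_mul_inv]
      rw [div_le_one (by linarith)]
      linarith
  -- elements of the unitization
  set e : A := cutdown a ε with hedef
  set bl : A := cutdown b lam with hbldef
  have haA : IsSelfAdjoint ((a : A⁺¹)) := IsSelfAdjoint.inr ℂ (IsSelfAdjoint.of_nonneg ha)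
  have hbA : IsSelfAdjoint ((b : A⁺¹)) := IsSelfAdjoint.inr ℂ (IsSelfAdjoint.of_nonneg hb)
  have ha' : 0 ≤ (a : A⁺¹) := inr_nonneg_iff.mpr ha
  have hb' : 0 ≤ (b : A⁺¹) := inr_nonneg_iff.mpr hb
  have hσa : ∀ t ∈ spectrum ℝ (a : A⁺¹), (0:ℝ) ≤ t := fun t ht =>
    spectrum_nonneg_of_nonneg ha' ht
  have hE : ((e : A) : A⁺¹) = cfc (fun t : ℝ => max 0 (t - ε)) (a : A⁺¹) := by
    rw [hedef, cutdown, Unitization.real_cfcₙ_eq_cfc_inr a _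
      (by rw [max_eq_left (by linarith : (0:ℝ) - ε ≤ 0)])]
  have hBl : ((bl : A) : A⁺¹) = cfc (fun t : ℝ => max 0 (t - lam)) (b : A⁺¹) := by
    rw [hbldef, cutdown, Unitization.real_cfcₙ_eq_cfc_inr b _
      (by rw [max_eq_left (by linarith : (0:ℝ) - lam ≤ 0)])]
  have hE_nn : 0 ≤ ((e : A) : A⁺¹) := by
    rw [hE]; exact cfc_nonneg fun t ht => le_max_left 0 _
  have hBl_nn : 0 ≤ ((bl : A) : A⁺¹) := by
    rw [hBl]; exact cfc_nonneg fun t ht => le_max_left 0 _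
  set F : A⁺¹ := cfc f (a : A⁺¹) with hFdef
  have hFsa : IsSelfAdjoint F := cfc_predicate _ _
  -- step 1 : `a ≤ b + η`
  have h1 : (a : A⁺¹) ≤ (b : A⁺¹) + algebraMap ℝ A⁺¹ η := by
    have hd : ((a - b : A) : A⁺¹) ≤ algebraMap ℝ A⁺¹ η := by
      refine le_trans (IsSelfAdjoint.le_algebraMap_norm_self
        (IsSelfAdjoint.inr ℂ ((IsSelfAdjoint.of_nonneg ha).sub (IsSelfAdjoint.of_nonneg hb)))) ?_
      exact myAlgebraMap_mono (by rw [Unitization.norm_inr]; exact hab.le)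
    rw [Unitization.inr_sub] at hd
    exact sub_le_iff_le_add'.mp hd |>.trans_eq (by abel)
  -- step 2 : `b ≤ bl + lam`
  have h2 : (b : A⁺¹) ≤ ((bl : A) : A⁺¹) + algebraMap ℝ A⁺¹ lam := by
    have : ((bl : A) : A⁺¹) + algebraMap ℝ A⁺¹ lam =
        cfc (fun t : ℝ => max 0 (t - lam) + lam) (b : A⁺¹) := by
      rw [cfc_add (a := (b : A⁺¹)) _ _ (by fun_prop) (by fun_prop), hBl, cfc_const lam _ hbA]
    rw [this]
    conv_lhs => rw [← cfc_id ℝ (b : A⁺¹) hbA]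
    exact cfc_mono fun t ht => by simp only [id]; have := le_max_right 0 (t - lam); linarith
  -- step 3 : `e = F * (a - δ) * F`
  have hX : (a : A⁺¹) - algebraMap ℝ A⁺¹ δ = cfc (fun t : ℝ => t - δ) (a : A⁺¹) := by
    rw [cfc_sub _ _ (a : A⁺¹) (by fun_prop) (by fun_prop), cfc_id' ℝ (a : A⁺¹) haA,
      cfc_const δ _ haA]
  have hconj_cfc : ∀ g : ℝ → ℝ, ContinuousOn g (spectrum ℝ (a : A⁺¹)) →
      cfc (fun t : ℝ => f t * g t * f t) (a : A⁺¹) = F * cfc g (a : A⁺¹) * F := by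
    intro g hg
    rw [cfc_mul (fun t => f t * g t) f _ (hfc.continuousOn.mul hg) hfc.continuousOn,
      cfc_mul f g _ hfc.continuousOn hg, hFdef]
  have hf_cut : ∀ t : ℝ, f t * (t - δ) * f t = max 0 (t - ε) := fun t => by
    rcases le_or_gt t ε with h0 | h0
    · rw [hf_eq_zero t h0, max_eq_left (by linarith : t - ε ≤ 0)]
      ring
    · have h7 : f t * (t - δ) * f t = (f t * f t) * (t - δ) := by ring
      rw [h7, hf_sq t, max_eq_right (by linarith : (0:ℝ) ≤ t - ε),
        max_eq_right (by linarith : (0:ℝ) ≤ t - δ)]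
      field_simp
      rw [div_self (ne_of_gt (by linarith : (0:ℝ) < t - δ))]
  have hEF : ((e : A) : A⁺¹) = F * ((a : A⁺¹) - algebraMap ℝ A⁺¹ δ) * F := by
    rw [hX, ← hconj_cfc _ (by fun_prop), hE]
    exact cfc_congr fun t ht => (hf_cut t).symm
  -- step 4
  set Y : A⁺¹ := F * ((bl : A) : A⁺¹) * F with hYdef
  have hY_nn : 0 ≤ Y := by
    rw [hYdef]
    have := star_left_conjugate_nonneg hBl_nn F
    rwa [hFsa.star_eq] at this
  have halg : algebraMap ℝ A⁺¹ lam + algebraMap ℝ A⁺¹ η - algebraMap ℝ A⁺¹ δ =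
      algebraMap ℝ A⁺¹ s := by
    rw [← map_add, ← map_sub]; congr 1; rw [hδdef, hεdef]; ring
  have h3 : (a : A⁺¹) - algebraMap ℝ A⁺¹ δ ≤ ((bl : A) : A⁺¹) + algebraMap ℝ A⁺¹ s := by
    calc (a:A⁺¹) - algebraMap ℝ A⁺¹ δ
        ≤ ↑bl + algebraMap ℝ A⁺¹ lam + algebraMap ℝ A⁺¹ η - algebraMap ℝ A⁺¹ δ :=
          sub_le_sub_right (h1.trans (add_le_add h2 le_rfl)) _
      _ = ↑bl + (algebraMap ℝ A⁺¹ lam + algebraMap ℝ A⁺¹ η - algebraMap ℝ A⁺¹ δ) := by abel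
      _ = ↑bl + algebraMap ℝ A⁺¹ s := by rw [halg]
  have h5 : F * algebraMap ℝ A⁺¹ s * F ≤ algebraMap ℝ A⁺¹ s := by
    have e5 : cfc (fun t : ℝ => f t * s * f t) ((a : A⁺¹)) = F * algebraMap ℝ A⁺¹ s * F := by
      rw [hconj_cfc _ continuousOn_const, cfc_const s _ haA]
    rw [← e5, ← cfc_const s ((a : A⁺¹)) haA]
    refine cfc_mono (fun t ht => ?_)
      ((hfc.continuousOn.mul continuousOn_const).mul hfc.continuousOn) continuousOn_const
    have h6 := hf_sq_le_one t
    have h8 : f t * s * f t = s * (f t * f t) := by ring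
    rw [h8]
    nlinarith [Real.sqrt_nonneg ((0 ⊔ (t - ε)) * (0 ⊔ (t - δ))⁻¹)]
  have hEY : ((e : A) : A⁺¹) ≤ Y + algebraMap ℝ A⁺¹ s := by
    have hc := star_left_conjugate_le_conjugate h3 F
    rw [hFsa.star_eq] at hc
    calc ((e:A):A⁺¹) = F * ((a:A⁺¹) - algebraMap ℝ A⁺¹ δ) * F := hEF
      _ ≤ F * (↑bl + algebraMap ℝ A⁺¹ s) * F := hc
      _ = Y + F * algebraMap ℝ A⁺¹ s * F := by rw [hYdef]; noncomm_ring
      _ ≤ Y + algebraMap ℝ A⁺¹ s := add_le_add_right h5 Y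
  -- step 5 : the key approximation
  set C : A⁺¹ := cfc Real.sqrt ((e : A) : A⁺¹) *
    cfc (fun t : ℝ => (Real.sqrt (t + 2 * s))⁻¹) Y with hCdef
  have hkey := key_approx ((e : A) : A⁺¹) Y hE_nn hY_nn hs hEY
  rw [← hCdef] at hkey
  set D : A⁺¹ := C * F with hDdef
  have hfstD : D.fst = 0 := by
    have h6 : cfc Real.sqrt ((e : A) : A⁺¹) = ((cfcₙ Real.sqrt e : A) : A⁺¹) :=
      (Unitization.real_cfcₙ_eq_cfc_inr e Real.sqrt Real.sqrt_zero).symm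
    rw [hDdef, hCdef, Unitization.fst_mul, Unitization.fst_mul, h6, Unitization.fst_inr]
    simp
  refine ⟨D.snd, ?_⟩
  have hDinr : ((D.snd : A) : A⁺¹) = D := by
    apply Unitization.ext
    · rw [Unitization.fst_inr, hfstD]
    · rw [Unitization.snd_inr]
  have hcbc : ((D.snd * bl * star D.snd : A) : A⁺¹) = C * Y * star C := by
    rw [Unitization.inr_mul, Unitization.inr_mul, Unitization.inr_star, hDinr, hYdef, hDdef,
      star_mul, hFsa.star_eq]
    noncomm_ring
  rw [← Unitization.norm_inr (𝕜 := ℂ), Unitization.inr_sub, hcbc, norm_sub_rev]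
  exact hkey


/-- Let `A` be a C*-algebra, `a b ∈ A₊` with `‖a - b‖ < η` and `λ > 0`.
Then `(a - λ - η)₊ ≾_A (b - λ)₊`. -/
theorem cutdown_cuntzSub_of_norm_lt {A : Type*} [NonUnitalCStarAlgebra A]
    [PartialOrder A] [StarOrderedRing A]
    (a b : A) (ha : 0 ≤ a) (hb : 0 ≤ b) (η : ℝ) (hη : 0 < η)
    (hab : ‖a - b‖ < η) (lam : ℝ) (hlam : 0 < lam) :
    CuntzSub (cutdown a (lam + η)) (cutdown b lam) := by
  have step := fun n : ℕ => exists_approx a b ha hb η hη hab lam hlam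
      (s := min (lam / 2) (1 / ((n : ℝ) + 1)))
      (lt_min (by linarith) (by positivity)) ((min_le_left _ _).trans_lt (by linarith))
  choose c hc using step
  refine ⟨c, ?_⟩
  rw [tendsto_iff_norm_sub_tendsto_zero]
  have hbnd : Tendsto (fun n : ℕ => 2 * min (lam / 2) (1 / ((n : ℝ) + 1))) atTop (𝓝 0) := by
    have h1 : Tendsto (fun n : ℕ => 1 / ((n : ℝ) + 1)) atTop (𝓝 0) :=
      tendsto_one_div_add_atTop_nhds_zero_nat
    have h2 := (tendsto_const_nhds (x := lam / 2) (f := atTop (α := ℕ))).min h1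
    rw [min_eq_right (by linarith)] at h2
    simpa using h2.const_mul 2
  exact squeeze_zero (fun n => norm_nonneg _) (fun n => hc n) hbnd
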